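/- For every expanding search S on Q and every real r > 0 with f_Q(r) < ∞, the supremum over points H ≠ O of the normalized search time T(S,H)/d(H) is at least f_Q(r)/r. Consequently, every expanding search S satisfies sup_{H ≠ O} T(S,H)/d(H) ≥ sup_{r>0} f_Q(r)/r. -/

import Mathlib

open MeasureTheory Metric

/-- The (expanding) search time of the point `H` under the search `S`: the infimum of the
admissible times `t` (i.e. `0 ≤ t < λ(Q)`) with `H ∈ S t`, equal to `∞` if there is none. -/
noncomputable def searchTime {Q : Type*} [MetricSpace Q] [MeasurableSpace Q]
    (μ : Measure Q) (S : ℝ → Set Q) (H : Q) : ENNReal :=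
  ⨅ (t : ℝ) (_ : 0 ≤ t ∧ ENNReal.ofReal t < μ Set.univ ∧ H ∈ S t), ENNReal.ofReal t

/-- `S` is an expanding search on `Q` rooted at `O`: a family of measurable connected subsets
`S t` for `0 ≤ t < λ(Q)` with `S 0 = {O}`, nondecreasing in `t`, and `λ (S t) = t`. -/
def IsExpandingSearch {Q : Type*} [MetricSpace Q] [MeasurableSpace Q]
    (μ : Measure Q) (O : Q) (S : ℝ → Set Q) : Prop :=
  S 0 = {O} ∧
  (∀ t : ℝ, 0 ≤ t → ENNReal.ofReal t < μ Set.univ →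
    MeasurableSet (S t) ∧ IsConnected (S t) ∧ μ (S t) = ENNReal.ofReal t) ∧
  (∀ t t' : ℝ, 0 ≤ t → t ≤ t' → ENNReal.ofReal t' < μ Set.univ → S t ⊆ S t')

/-- For every expanding search `S` on `Q` and every `r > 0` with
`f_Q(r) < ∞`, the supremum over `H ≠ O` of the normalized search time is at least `f_Q(r)/r`;
consequently it is at least `sup_{r>0} f_Q(r)/r`. -/
theorem expanding_search_competitive_lower_bound
    {Q : Type*} [MetricSpace Q] [MeasurableSpace Q]
    (μ : Measure Q) (O : Q) (S : ℝ → Set Q) (hS : IsExpandingSearch μ O S) :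
    (∀ r : ℝ, 0 < r → μ (closedBall O r) < ⊤ →
      μ (closedBall O r) / ENNReal.ofReal r ≤
        ⨆ (H : Q) (_ : H ≠ O), searchTime μ S H / ENNReal.ofReal (dist O H)) ∧
    (⨆ (r : ℝ) (_ : 0 < r), μ (closedBall O r) / ENNReal.ofReal r) ≤
      ⨆ (H : Q) (_ : H ≠ O), searchTime μ S H / ENNReal.ofReal (dist O H) := by
  obtain ⟨hS0, hSmeas, hSmono⟩ := hS
  set A := ⨆ (H : Q) (_ : H ≠ O), searchTime μ S H / ENNReal.ofReal (dist O H) with hA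
  have key : ∀ r : ℝ, 0 < r → μ (closedBall O r) / ENNReal.ofReal r ≤ A := by
    intro r hr
    rcases eq_top_or_lt_top A with hAtop | hAlt
    · simp [hAtop]
    have hr0 : ENNReal.ofReal r ≠ 0 := by
      simp [ENNReal.ofReal_eq_zero, not_le, hr]
    rw [ENNReal.div_le_iff_le_mul (Or.inl hr0) (Or.inl ENNReal.ofReal_ne_top)]
    set τ := A * ENNReal.ofReal r with hτ
    have hτtop : τ ≠ ⊤ := ENNReal.mul_ne_top hAlt.ne ENNReal.ofReal_ne_top
    rcases eq_or_ne (μ Set.univ) 0 with h0 | h0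
    · calc μ (closedBall O r) ≤ μ Set.univ := measure_mono (Set.subset_univ _)
        _ = 0 := h0
        _ ≤ τ := zero_le
    have hOmem : μ {O} = 0 := by
      have := (hSmeas 0 le_rfl (by simpa using h0.bot_lt)).2.2
      simpa [hS0] using this
    refine ENNReal.le_of_forall_pos_le_add fun ε hε hτlt => ?_
    by_cases hcase : τ + ε < μ Set.univ
    · set t := (τ + (ε : ENNReal)).toReal with htdef
      have htne : τ + (ε : ENNReal) ≠ ⊤ := ENNReal.add_ne_top.mpr ⟨hτtop, ENNReal.coe_ne_top⟩
      have ht : ENNReal.ofReal t = τ + ε := ENNReal.ofReal_toReal htne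
      have ht0 : (0:ℝ) ≤ t := ENNReal.toReal_nonneg
      have htlt : ENNReal.ofReal t < μ Set.univ := by rw [ht]; exact hcase
      have hsub : closedBall O r ⊆ S t ∪ {O} := by
        intro H hH
        by_cases hHO : H = O
        · exact Or.inr hHO
        · left
          have hST : searchTime μ S H / ENNReal.ofReal (dist O H) ≤ A :=
            le_iSup₂ (f := fun (H : Q) (_ : H ≠ O) =>
              searchTime μ S H / ENNReal.ofReal (dist O H)) H hHO
          have hd : (0:ℝ) < dist O H := dist_pos.mpr (Ne.symm hHO)
          have hd0 : ENNReal.ofReal (dist O H) ≠ 0 := by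
            simpa [ENNReal.ofReal_eq_zero, not_le] using hd
          have h1 : searchTime μ S H ≤ A * ENNReal.ofReal (dist O H) :=
            (ENNReal.div_le_iff_le_mul (Or.inl hd0) (Or.inl ENNReal.ofReal_ne_top)).mp hST
          have hdr : dist O H ≤ r := by
            rw [dist_comm]; exact mem_closedBall.mp hH
          have h2 : searchTime μ S H ≤ τ :=
            h1.trans (mul_le_mul_right (ENNReal.ofReal_le_ofReal hdr) A)
          have h3 : searchTime μ S H < ENNReal.ofReal t := by
            rw [ht]
            exact h2.trans_lt (ENNReal.lt_add_right hτtop (by exact_mod_cast hε.ne'))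
          unfold searchTime at h3
          simp only [iInf_lt_iff] at h3
          obtain ⟨t', ⟨ht'0, ht'u, hHS⟩, hlt⟩ := h3
          have ht't : t' ≤ t := by
            by_contra hc
            exact hlt.not_ge (ENNReal.ofReal_le_ofReal (le_of_not_ge hc))
          exact hSmono t' t ht'0 ht't htlt hHS
      calc μ (closedBall O r) ≤ μ (S t ∪ {O}) := measure_mono hsub
        _ ≤ μ (S t) + μ {O} := measure_union_le _ _
        _ = ENNReal.ofReal t + 0 := by rw [(hSmeas t ht0 htlt).2.2, hOmem]
        _ = τ + ε := by rw [add_zero, ht]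
    · calc μ (closedBall O r) ≤ μ Set.univ := measure_mono (Set.subset_univ _)
        _ ≤ τ + ε := not_lt.mp hcase
  exact ⟨fun r hr _ => key r hr, iSup₂_le fun r hr => key r hr⟩
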